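/- arXiv:1402.4879 — 4 statements merged into one kernel-verified Lean document; each statement's English description precedes it below -/
import Mathlib

section
/- Let M be the real 4×4 matrix [[h−a, f, −b, 0],[g, e−a, 0, −b],[−c, 0, h−d, f],[0, −c, g, e−d]] with a,b,c,d,e,f,g,h ∈ ℝ. Then the eigenvalues of M (over ℂ) can be ordered as λ₁, λ₂, λ₃, λ₄ so that λ₁ + λ₂ = λ₃ + λ₄. -/
open Polynomial Matrix in
private lemma det_fin_four' (A : Matrix (Fin 4) (Fin 4) ℂ) : A.det =
    A 0 0 * (A 1 1 * (A 2 2 * A 3 3 - A 2 3 * A 3 2) - A 1 2 * (A 2 1 * A 3 3 - A 2 3 * A 3 1)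
      + A 1 3 * (A 2 1 * A 3 2 - A 2 2 * A 3 1))
  - A 0 1 * (A 1 0 * (A 2 2 * A 3 3 - A 2 3 * A 3 2) - A 1 2 * (A 2 0 * A 3 3 - A 2 3 * A 3 0)
      + A 1 3 * (A 2 0 * A 3 2 - A 2 2 * A 3 0))
  + A 0 2 * (A 1 0 * (A 2 1 * A 3 3 - A 2 3 * A 3 1) - A 1 1 * (A 2 0 * A 3 3 - A 2 3 * A 3 0)
      + A 1 3 * (A 2 0 * A 3 1 - A 2 1 * A 3 0))
  - A 0 3 * (A 1 0 * (A 2 1 * A 3 2 - A 2 2 * A 3 1) - A 1 1 * (A 2 0 * A 3 2 - A 2 2 * A 3 0)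
      + A 1 2 * (A 2 0 * A 3 1 - A 2 1 * A 3 0)) := by
  rw [Matrix.det_succ_row_zero]
  simp [Fin.sum_univ_succ, Matrix.det_fin_three, Matrix.submatrix_apply, Fin.succAbove,
    show (Fin.succ 2 : Fin 4) = 3 from rfl,
    show (Fin.castSucc 2 : Fin 4) = 2 from rfl]
  ring

set_option maxHeartbeats 3000000 in
open Polynomial in
/-- The eigenvalues of the ad-matrix `M` can be ordered so that
`λ₁ + λ₂ = λ₃ + λ₄`. -/
theorem stmt6 (a b c d e f g h : ℝ) :
    let M : Matrix (Fin 4) (Fin 4) ℝ :=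
      !![h - a, f, -b, 0; g, e - a, 0, -b; -c, 0, h - d, f; 0, -c, g, e - d]
    ∃ l1 l2 l3 l4 : ℂ,
      (M.map (fun x : ℝ => (x : ℂ))).charpoly =
        (X - C l1) * (X - C l2) * (X - C l3) * (X - C l4) ∧
      l1 + l2 = l3 + l4 := by
  intro M
  obtain ⟨u, hu⟩ := IsAlgClosed.exists_pow_nat_eq (k := ℂ)
    ((((h : ℂ) - e) / 2) ^ 2 + f * g) zero_lt_two
  obtain ⟨v, hv⟩ := IsAlgClosed.exists_pow_nat_eq (k := ℂ)
    ((((a : ℂ) - d) / 2) ^ 2 + b * c) zero_lt_two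
  set p : ℂ := ((e : ℂ) + h) / 2 with hp
  set q : ℂ := ((a : ℂ) + d) / 2 with hq
  refine ⟨p + u - (q + v), p - u - (q - v), p + u - (q - v), p - u - (q + v), ?_, by ring⟩
  apply Polynomial.funext
  intro x
  show (Polynomial.evalRingHom x) _ = _
  rw [Matrix.charpoly, RingHom.map_det, det_fin_four']
  simp only [M, RingHom.mapMatrix_apply, Matrix.map_apply, Matrix.charmatrix_apply,
    Matrix.diagonal_apply, Matrix.of_apply, Matrix.cons_val', Matrix.cons_val_zero,
    Matrix.cons_val_one, Matrix.head_cons, Matrix.head_fin_const, Matrix.empty_val',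
    Matrix.cons_val_fin_one, Matrix.cons_val_two, Matrix.cons_val_three, Matrix.tail_cons,
    Fin.reduceEq, reduceIte, coe_evalRingHom, eval_sub, eval_mul, eval_add, eval_neg, eval_C, eval_X, eval_zero,
    Complex.ofReal_sub, Complex.ofReal_neg, Complex.ofReal_zero]
  norm_num
  linear_combination (2 * (x - p + q) ^ 2 - ((((h : ℂ) - e) / 2) ^ 2 + f * g) - u ^ 2
      + ((((a : ℂ) - d) / 2) ^ 2 + b * c) + v ^ 2) * hu
    + (2 * (x - p + q) ^ 2 + ((((h : ℂ) - e) / 2) ^ 2 + f * g) + u ^ 2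
      - ((((a : ℂ) - d) / 2) ^ 2 + b * c) - v ^ 2) * hv
end

section
/- There is no injective Lie algebra homomorphism from the five-dimensional real Lie algebra with basis e₁,...,e₅ and nonzero brackets [e₂,e₃]=e₁, [e₂,e₅]=e₃, [e₄,e₅]=e₄ (algebra A₅,₂₂) into gl(4,ℝ) whose image consists of upper triangular matrices. -/
open Polynomial Module LinearMap Finset

section Helpers

variable {W : Type} [AddCommGroup W] [Module ℝ W]

private lemma cancel1 {u : W} (hu : u ≠ 0) {a b : ℝ} (h : a • u = b • u) : a = b := by
  have h2 : (a - b) • u = 0 := by rw [sub_smul, h, sub_self]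
  rcases smul_eq_zero.mp h2 with h3 | h3
  · linarith [sub_eq_zero.mp (by linarith : a - b = 0)]
  · exact absurd h3 hu

private lemma ext3 {e₁ e₂ e₃ : W} (h : LinearIndependent ℝ ![e₁, e₂, e₃])
    {a1 a2 a3 b1 b2 b3 : ℝ}
    (heq : a1 • e₁ + a2 • e₂ + a3 • e₃ = b1 • e₁ + b2 • e₂ + b3 • e₃) :
    a1 = b1 ∧ a2 = b2 ∧ a3 = b3 := by
  rw [Fintype.linearIndependent_iff] at h
  have key : (a1 - b1) • e₁ + (a2 - b2) • e₂ + (a3 - b3) • e₃ = 0 := by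
    linear_combination (norm := module) heq
  have h0 := h ![a1 - b1, a2 - b2, a3 - b3] (by
    simpa [Fin.sum_univ_three] using key)
  exact ⟨sub_eq_zero.mp (h0 0), sub_eq_zero.mp (h0 1), sub_eq_zero.mp (h0 2)⟩

end Helpers

section LemL

variable {W : Type} [AddCommGroup W] [Module ℝ W] [FiniteDimensional ℝ W]

private lemma lemL (hdim : Module.finrank ℝ W ≤ 3) (x w y z : Module.End ℝ W)
    (hy : x * w - w * x = y) (hz : x * y - y * x = z)
    (hyw : y * w - w * y = 0)
    (hzx : z * x - x * z = 0) (hzy : z * y - y * z = 0) (hzw : z * w - w * z = 0)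
    (hnil : z ^ 4 = 0) : z = 0 := by
  have cx : ∀ t, z (x t) = x (z t) := fun t => by
    have := LinearMap.ext_iff.mp (sub_eq_zero.mp hzx) t
    simpa [Module.End.mul_apply] using this
  have cy : ∀ t, z (y t) = y (z t) := fun t => by
    have := LinearMap.ext_iff.mp (sub_eq_zero.mp hzy) t
    simpa [Module.End.mul_apply] using this
  have cw : ∀ t, z (w t) = w (z t) := fun t => by
    have := LinearMap.ext_iff.mp (sub_eq_zero.mp hzw) t
    simpa [Module.End.mul_apply] using this
  have hz3 : z ^ 3 = 0 := by
    have hk : LinearMap.ker (z ^ 4) = ⊤ := by rw [hnil]; exact LinearMap.ker_zero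
    have h1 := Module.End.ker_pow_le_ker_pow_finrank z 4
    have h2 : LinearMap.ker (z ^ Module.finrank ℝ W) = ⊤ := eq_top_iff.mpr (hk ▸ h1)
    have hzf : z ^ Module.finrank ℝ W = 0 := LinearMap.ker_eq_top.mp h2
    have h3 : (3 : ℕ) = (3 - Module.finrank ℝ W) + Module.finrank ℝ W := by omega
    rw [h3, pow_add, hzf, mul_zero]
  have hz3v : ∀ u, z (z (z u)) = 0 := fun u => by
    have := LinearMap.ext_iff.mp hz3 u
    simpa [pow_succ, pow_zero, Module.End.mul_apply, Module.End.one_apply] using this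
  by_contra hz0
  by_cases hzz : z * z = 0
  · -- z² = 0
    obtain ⟨e₃, he₃⟩ : ∃ t, z t ≠ 0 := by
      by_contra hA; push_neg at hA
      exact hz0 (by ext u; simpa using hA u)
    obtain ⟨e₁, he₁⟩ : ∃ a, z e₃ = a := ⟨z e₃, rfl⟩
    have he₁0 : e₁ ≠ 0 := he₁ ▸ he₃
    have hzzv : ∀ t, z (z t) = 0 := fun t => by
      have := LinearMap.ext_iff.mp hzz t
      simpa [Module.End.mul_apply] using this
    have hze₁ : z e₁ = 0 := he₁ ▸ hzzv e₃
    have hrange : LinearMap.range z ≤ LinearMap.ker z := by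
      rintro _ ⟨u, rfl⟩; exact LinearMap.mem_ker.mpr (hzzv u)
    by_cases hker : LinearMap.ker z ≤ Submodule.span ℝ {e₁}
    · -- 2-dimensional case
      have hli : LinearIndependent ℝ ![e₁, e₃] := by
        rw [Fintype.linearIndependent_iff]
        intro g hg
        simp only [Fin.sum_univ_two, Matrix.cons_val_zero, Matrix.cons_val_one,
          Matrix.head_cons] at hg
        have h1 : g 1 • e₁ = 0 := by
          have := congrArg z hg
          simpa [map_add, map_smul, hze₁, he₁] using this
        have hg1 : g 1 = 0 := by
          rcases smul_eq_zero.mp h1 with h | h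
          · exact h
          · exact absurd h he₁0
        have hg0 : g 0 = 0 := by
          rw [hg1, zero_smul, add_zero] at hg
          rcases smul_eq_zero.mp hg with h | h
          · exact h
          · exact absurd h he₁0
        intro i; fin_cases i <;> assumption
      have hfr2 : Module.finrank ℝ W = 2 := by
        have hge : 2 ≤ Module.finrank ℝ W := by
          simpa using hli.fintype_card_le_finrank
        have h1 : Module.finrank ℝ (LinearMap.ker z) ≤ 1 := by
          have := Submodule.finrank_mono hker
          simpa [finrank_span_singleton he₁0] using this
        have h2 : Module.finrank ℝ (LinearMap.range z) ≤ 1 :=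
          le_trans (Submodule.finrank_mono hrange) h1
        have h3 := LinearMap.finrank_range_add_finrank_ker z
        omega
      have hcard : Fintype.card (Fin 2) = Module.finrank ℝ W := by simp [hfr2]
      let B := basisOfLinearIndependentOfCardEqFinrank hli hcard
      have hB : ⇑B = ![e₁, e₃] := coe_basisOfLinearIndependentOfCardEqFinrank _ _
      have hrep : ∀ u : Module.End ℝ W, (∀ t, z (u t) = u (z t)) →
          ∃ p : Polynomial ℝ, u = aeval z p := by
        intro u hcu
        have h1 : u e₁ ∈ LinearMap.ker z := LinearMap.mem_ker.mpr (by
          rw [hcu e₁, hze₁, map_zero])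
        obtain ⟨t, ht⟩ := Submodule.mem_span_singleton.mp (hker h1)
        have h2 : u e₃ ∈ Submodule.span ℝ (Set.range ![e₁, e₃]) := by
          have hsp : Submodule.span ℝ (Set.range ![e₁, e₃]) = ⊤ := by
            rw [← hB]; exact B.span_eq
          rw [hsp]; trivial
        rw [Submodule.mem_span_range_iff_exists_fun] at h2
        obtain ⟨c, hc⟩ := h2
        simp only [Fin.sum_univ_two, Matrix.cons_val_zero, Matrix.cons_val_one,
          Matrix.head_cons] at hc
        have hmt : c 1 = t := by
          have hA1 : z (u e₃) = u e₁ := by rw [hcu e₃, he₁]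
          have hA2 : z (u e₃) = c 1 • e₁ := by
            rw [← hc]; simp [map_add, map_smul, hze₁, he₁]
          exact cancel1 he₁0 (by rw [← hA2, hA1, ← ht])
        refine ⟨C t + C (c 0) * X, ?_⟩
        apply B.ext
        intro i
        rw [show B i = ![e₁, e₃] i from congrFun hB i]
        fin_cases i
        · show u e₁ = (aeval z (C t + C (c 0) * X)) e₁
          have heval : (aeval z (C t + C (c 0) * X)) e₁ = t • e₁ := by
            simp [Module.algebraMap_end_apply, Module.End.mul_apply, hze₁]
          rw [heval]; exact ht.symm
        · show u e₃ = (aeval z (C t + C (c 0) * X)) e₃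
          have heval : (aeval z (C t + C (c 0) * X)) e₃ = t • e₃ + c 0 • e₁ := by
            simp [Module.algebraMap_end_apply, Module.End.mul_apply, he₁]
          rw [heval, ← hc, hmt]; abel
      obtain ⟨px, hpx⟩ := hrep x cx
      obtain ⟨py, hpy⟩ := hrep y cy
      apply hz0
      rw [← hz, hpx, hpy, ← map_mul, ← map_mul, mul_comm px py, sub_self]
    · -- 3-dimensional main case
      obtain ⟨e₂, he₂k, he₂s⟩ := SetLike.not_le_iff_exists.mp hker
      have hze₂ : z e₂ = 0 := LinearMap.mem_ker.mp he₂k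
      have hli : LinearIndependent ℝ ![e₁, e₂, e₃] := by
        rw [Fintype.linearIndependent_iff]
        intro g hg
        simp only [Fin.sum_univ_three, Matrix.cons_val_zero, Matrix.cons_val_one,
          Matrix.head_cons, Matrix.cons_val_two, Matrix.tail_cons] at hg
        have h2 : g 2 • e₁ = 0 := by
          have := congrArg z hg
          simpa [map_add, map_smul, hze₁, hze₂, he₁] using this
        have hg2 : g 2 = 0 := by
          rcases smul_eq_zero.mp h2 with h | h
          · exact h
          · exact absurd h he₁0
        rw [hg2, zero_smul, add_zero] at hg
        have hg1 : g 1 = 0 := by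
          by_contra hne
          apply he₂s
          rw [Submodule.mem_span_singleton]
          have h5 : g 1 • e₂ = -(g 0 • e₁) := eq_neg_of_add_eq_zero_right hg
          have h6 : (-(g 0)) • e₁ = g 1 • e₂ := by rw [neg_smul, ← h5]
          refine ⟨(g 1)⁻¹ * -(g 0), ?_⟩
          rw [mul_smul, h6, smul_smul, inv_mul_cancel₀ hne, one_smul]
        rw [hg1, zero_smul, add_zero] at hg
        have hg0 : g 0 = 0 := by
          rcases smul_eq_zero.mp hg with h | h
          · exact h
          · exact absurd h he₁0
        intro i; fin_cases i <;> assumption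
      have hfr3 : Module.finrank ℝ W = 3 :=
        le_antisymm hdim (by simpa using hli.fintype_card_le_finrank)
      have hkerne : LinearMap.ker z ≠ ⊤ := by
        intro hk
        exact he₃ (LinearMap.mem_ker.mp (hk ▸ Submodule.mem_top))
      have hrangene : Module.finrank ℝ (LinearMap.range z) ≠ 0 := by
        intro h0
        have hbot : LinearMap.range z = ⊥ := Submodule.finrank_eq_zero.mp h0
        refine he₁0 ?_
        have : e₁ ∈ (⊥ : Submodule ℝ W) := hbot ▸ (he₁ ▸ LinearMap.mem_range_self z e₃)
        simpa using this
      have hrn := LinearMap.finrank_range_add_finrank_ker z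
      have hkerle : Module.finrank ℝ (LinearMap.ker z) ≠ 3 := by
        intro h3
        exact hkerne (Submodule.eq_top_of_finrank_eq (by rw [h3, hfr3]))
      have hkfr : Module.finrank ℝ (LinearMap.ker z) = 2 := by
        have := Submodule.finrank_mono hrange
        omega
      have hrfr : Module.finrank ℝ (LinearMap.range z) = 1 := by omega
      have hli2 : LinearIndependent ℝ ![e₁, e₂] := by
        have h := hli.comp ![0, 1] (by decide)
        have hcomp : (![e₁, e₂, e₃] ∘ ![0, 1]) = ![e₁, e₂] := by
          funext i; fin_cases i <;> rfl
        rwa [hcomp] at h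
      have hkereq : LinearMap.ker z = Submodule.span ℝ (Set.range ![e₁, e₂]) := by
        refine (Submodule.eq_of_le_of_finrank_eq ?_ ?_).symm
        · rw [Submodule.span_le]
          rintro _ ⟨i, rfl⟩
          fin_cases i
          · exact LinearMap.mem_ker.mpr hze₁
          · exact LinearMap.mem_ker.mpr hze₂
        · rw [finrank_span_eq_card hli2, hkfr]; simp
      have hrangeeq : LinearMap.range z = Submodule.span ℝ {e₁} := by
        refine (Submodule.eq_of_le_of_finrank_eq ?_ ?_).symm
        · rw [Submodule.span_le, Set.singleton_subset_iff]
          exact he₁ ▸ LinearMap.mem_range_self z e₃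
        · rw [finrank_span_singleton he₁0, hrfr]
      have hspan3 : Submodule.span ℝ (Set.range ![e₁, e₂, e₃]) = ⊤ := by
        apply Submodule.eq_top_of_finrank_eq
        rw [finrank_span_eq_card hli, hfr3]; simp
      have hcoeffs : ∀ u : Module.End ℝ W, (∀ t, z (u t) = u (z t)) →
          ∃ T P S Q R : ℝ, u e₁ = T • e₁ ∧ u e₂ = P • e₁ + S • e₂ ∧
            u e₃ = Q • e₁ + R • e₂ + T • e₃ := by
        intro u hcu
        have h1 : u e₁ ∈ LinearMap.range z := ⟨u e₃, by rw [hcu e₃, he₁]⟩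
        rw [hrangeeq] at h1
        obtain ⟨T, hT⟩ := Submodule.mem_span_singleton.mp h1
        have h2 : u e₂ ∈ LinearMap.ker z := LinearMap.mem_ker.mpr (by
          rw [hcu e₂, hze₂, map_zero])
        rw [hkereq, Submodule.mem_span_range_iff_exists_fun] at h2
        obtain ⟨c, hc⟩ := h2
        simp only [Fin.sum_univ_two, Matrix.cons_val_zero, Matrix.cons_val_one,
          Matrix.head_cons] at hc
        have h3 : u e₃ ∈ Submodule.span ℝ (Set.range ![e₁, e₂, e₃]) := by
          rw [hspan3]; trivial
        rw [Submodule.mem_span_range_iff_exists_fun] at h3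
        obtain ⟨d, hd⟩ := h3
        simp only [Fin.sum_univ_three, Matrix.cons_val_zero, Matrix.cons_val_one,
          Matrix.head_cons, Matrix.cons_val_two, Matrix.tail_cons] at hd
        have hTd : d 2 = T := by
          have hA1 : z (u e₃) = u e₁ := by rw [hcu e₃, he₁]
          have hA2 : z (u e₃) = d 2 • e₁ := by
            rw [← hd]; simp [map_add, map_smul, hze₁, hze₂, he₁]
          exact cancel1 he₁0 (by rw [← hA2, hA1, ← hT])
        exact ⟨T, c 0, c 1, d 0, d 1, hT.symm, hc.symm, by rw [← hd, hTd]⟩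
      obtain ⟨tx, px, sx, qx, rx, hx1, hx2, hx3⟩ := hcoeffs x cx
      obtain ⟨tw, pw, sw, qw, rw', hw1, hw2, hw3⟩ := hcoeffs w cw
      obtain ⟨ty, py, sy, qy, ry, hy1, hy2, hy3⟩ := hcoeffs y cy
      have hyv : ∀ t, x (w t) - w (x t) = y t := fun t => by
        have := LinearMap.ext_iff.mp hy t
        simpa [Module.End.mul_apply] using this
      have hzv : ∀ t, x (y t) - y (x t) = z t := fun t => by
        have := LinearMap.ext_iff.mp hz t
        simpa [Module.End.mul_apply] using this
      have hywv : ∀ t, y (w t) - w (y t) = 0 := fun t => by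
        have := LinearMap.ext_iff.mp hyw t
        simpa [Module.End.mul_apply] using this
      have hEty : ty = 0 := by
        have h := hyv e₁
        simp only [hx1, hw1, map_smul, hy1] at h
        have h' : ty • e₁ = (0:ℝ) • e₁ := by
          linear_combination (norm := module) -h
        exact cancel1 he₁0 h'
      have hE2 : tx * pw + sw * px - (tw * px + sx * pw) = py ∧ (0:ℝ) = sy := by
        have h := hyv e₂
        simp only [hx2, hw2, map_add, map_smul, hx1, hw1, hy2] at h
        have h' : (tx * pw + sw * px - (tw * px + sx * pw)) • e₁ + (0:ℝ) • e₂ + (0:ℝ) • e₃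
            = py • e₁ + sy • e₂ + (0:ℝ) • e₃ := by
          linear_combination (norm := module) h
        obtain ⟨ha, hb, _⟩ := ext3 hli h'
        exact ⟨ha, hb⟩
      have hE3 : sx * rw' + tw * rx - (sw * rx + tx * rw') = ry := by
        have h := hyv e₃
        simp only [hx3, hw3, map_add, map_smul, hx1, hx2, hw1, hw2, hy3] at h
        have h' : (tx * qw + px * rw' + qx * tw - (tw * qx + pw * rx + qw * tx)) • e₁
            + (sx * rw' + tw * rx - (sw * rx + tx * rw')) • e₂ + (0:ℝ) • e₃
            = qy • e₁ + ry • e₂ + ty • e₃ := by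
          linear_combination (norm := module) h
        exact (ext3 hli h').2.1
      have hE4 : tx * py + sy * px - (ty * px + sx * py) = 0 := by
        have h := hzv e₂
        simp only [hy2, hx2, map_add, map_smul, hx1, hy1, hze₂] at h
        have h' : (tx * py + sy * px - (ty * px + sx * py)) • e₁ + (0:ℝ) • e₂ + (0:ℝ) • e₃
            = (0:ℝ) • e₁ + (0:ℝ) • e₂ + (0:ℝ) • e₃ := by
          linear_combination (norm := module) h
        simpa using (ext3 hli h').1
      have hE5 : (tx * qy + px * ry + qx * ty - (ty * qx + py * rx + qy * tx)) = 1 ∧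
          (sx * ry + ty * rx - (sy * rx + tx * ry)) = 0 := by
        have h := hzv e₃
        simp only [hy3, hx3, map_add, map_smul, hx1, hx2, hy1, hy2, he₁] at h
        have h' : (tx * qy + px * ry + qx * ty - (ty * qx + py * rx + qy * tx)) • e₁
            + (sx * ry + ty * rx - (sy * rx + tx * ry)) • e₂ + (0:ℝ) • e₃
            = (1:ℝ) • e₁ + (0:ℝ) • e₂ + (0:ℝ) • e₃ := by
          linear_combination (norm := module) h
        obtain ⟨ha, hb, _⟩ := ext3 hli h'
        exact ⟨ha, hb⟩
      have hE6 : ty * pw + sw * py - (tw * py + sy * pw) = 0 := by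
        have h := hywv e₂
        simp only [hw2, hy2, map_add, map_smul, hy1, hw1] at h
        have h' : (ty * pw + sw * py - (tw * py + sy * pw)) • e₁ + (0:ℝ) • e₂ + (0:ℝ) • e₃
            = (0:ℝ) • e₁ + (0:ℝ) • e₂ + (0:ℝ) • e₃ := by
          linear_combination (norm := module) h
        simpa using (ext3 hli h').1
      have hE7 : sy * rw' + tw * ry - (sw * ry + ty * rw') = 0 := by
        have h := hywv e₃
        simp only [hw3, hy3, map_add, map_smul, hy1, hy2, hw1, hw2] at h
        have h' : (ty * qw + py * rw' + qy * tw - (tw * qy + pw * ry + qw * ty)) • e₁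
            + (sy * rw' + tw * ry - (sw * ry + ty * rw')) • e₂ + (0:ℝ) • e₃
            = (0:ℝ) • e₁ + (0:ℝ) • e₂ + (0:ℝ) • e₃ := by
          linear_combination (norm := module) h
        simpa using (ext3 hli h').2.1
      obtain ⟨hpyd, hsy⟩ := hE2
      obtain ⟨hone, hE5b⟩ := hE5
      rw [hEty] at hE4 hE5b hE6 hE7 hone
      rw [← hsy] at hE4 hE5b hE6 hE7
      by_cases hpy0 : py = 0
      · by_cases hry0 : ry = 0
        · exact absurd (by linear_combination hone + rx * hpy0 - px * hry0 : (0:ℝ) = 1)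
            (by norm_num)
        · have h1 : sx = tx := by
            have hgg : (sx - tx) * ry = 0 := by linear_combination hE5b
            rcases mul_eq_zero.mp hgg with h | h
            · exact sub_eq_zero.mp h
            · exact absurd h hry0
          have h2 : tw = sw := by
            have hgg : (tw - sw) * ry = 0 := by linear_combination hE7
            rcases mul_eq_zero.mp hgg with h | h
            · exact sub_eq_zero.mp h
            · exact absurd h hry0
          exact hry0 (by linear_combination rw' * h1 + rx * h2 - hE3)
      · have h1 : tx = sx := by
          have hgg : (tx - sx) * py = 0 := by linear_combination hE4
          rcases mul_eq_zero.mp hgg with h | h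
          · exact sub_eq_zero.mp h
          · exact absurd h hpy0
        have h2 : sw = tw := by
          have hgg : (sw - tw) * py = 0 := by linear_combination hE6
          rcases mul_eq_zero.mp hgg with h | h
          · exact sub_eq_zero.mp h
          · exact absurd h hpy0
        exact hpy0 (by linear_combination pw * h1 + px * h2 - hpyd)
  · -- z² ≠ 0 : centralizer of z is ℝ[z]
    obtain ⟨v, hv⟩ : ∃ v, z (z v) ≠ 0 := by
      by_contra hA; push_neg at hA
      exact hzz (by ext u; simpa [Module.End.mul_apply] using hA u)
    have hz4v : ∀ u, z (z (z (z u))) = 0 := fun u => hz3v (z u)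
    have hli : LinearIndependent ℝ ![v, z v, z (z v)] := by
      rw [Fintype.linearIndependent_iff]
      intro g hg
      simp only [Fin.sum_univ_three, Matrix.cons_val_zero, Matrix.cons_val_one,
        Matrix.head_cons, Matrix.cons_val_two, Matrix.tail_cons] at hg
      have h0 : g 0 = 0 := by
        have h := congrArg (fun t => z (z t)) hg
        simp only [map_add, map_smul, map_zero, hz3v, hz4v, smul_zero, add_zero] at h
        rcases smul_eq_zero.mp h with h | h
        · exact h
        · exact absurd h hv
      rw [h0, zero_smul, zero_add] at hg
      have h1 : g 1 = 0 := by
        have h := congrArg z hg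
        simp only [map_add, map_smul, map_zero, hz3v, smul_zero, add_zero] at h
        rcases smul_eq_zero.mp h with h | h
        · exact h
        · exact absurd h hv
      rw [h1, zero_smul, zero_add] at hg
      have h2 : g 2 = 0 := by
        rcases smul_eq_zero.mp hg with h | h
        · exact h
        · exact absurd h hv
      intro i; fin_cases i <;> assumption
    have hcard : Fintype.card (Fin 3) = Module.finrank ℝ W := by
      have := hli.fintype_card_le_finrank
      simp only [Fintype.card_fin] at this ⊢
      omega
    let B := basisOfLinearIndependentOfCardEqFinrank hli hcard
    have hB : ⇑B = ![v, z v, z (z v)] := coe_basisOfLinearIndependentOfCardEqFinrank _ _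
    have hrep : ∀ u : Module.End ℝ W, (∀ t, z (u t) = u (z t)) →
        ∃ p : Polynomial ℝ, u = aeval z p := by
      intro u hcu
      have h2 : u v ∈ Submodule.span ℝ (Set.range ![v, z v, z (z v)]) := by
        have hsp : Submodule.span ℝ (Set.range ![v, z v, z (z v)]) = ⊤ := by
          rw [← hB]; exact B.span_eq
        rw [hsp]; trivial
      rw [Submodule.mem_span_range_iff_exists_fun] at h2
      obtain ⟨c, hc⟩ := h2
      simp only [Fin.sum_univ_three, Matrix.cons_val_zero, Matrix.cons_val_one,
        Matrix.head_cons, Matrix.cons_val_two, Matrix.tail_cons] at hc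
      set P : Polynomial ℝ := C (c 0) + C (c 1) * X + C (c 2) * X ^ 2 with hP
      have heval : ∀ t, (aeval z P) t = c 0 • t + c 1 • z t + c 2 • z (z t) := by
        intro t
        simp [hP, Module.algebraMap_end_apply, Module.End.mul_apply, pow_two]
      refine ⟨P, ?_⟩
      apply B.ext
      intro i
      rw [show B i = ![v, z v, z (z v)] i from congrFun hB i]
      fin_cases i
      · show u v = (aeval z P) v
        rw [heval v, hc]
      · show u (z v) = (aeval z P) (z v)
        rw [heval (z v), ← hcu v, ← hc]
        simp [map_add, map_smul, hz3v]
      · show u (z (z v)) = (aeval z P) (z (z v))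
        rw [heval (z (z v)), ← hcu (z v), ← hcu v, ← hc]
        simp [map_add, map_smul, hz3v, hz4v]
    obtain ⟨px, hpx⟩ := hrep x cx
    obtain ⟨py, hpy⟩ := hrep y cy
    apply hz0
    rw [← hz, hpx, hpy, ← map_mul, ← map_mul, mul_comm px py, sub_self]

end LemL
section MainInfra

private lemma semiconj_pow' {R : Type} [Ring R] {a b c : R} (h : a * c = c * b) :
    ∀ k : ℕ, a ^ k * c = c * b ^ k := by
  intro k
  induction k with
  | zero => simp
  | succ n ih => rw [pow_succ', mul_assoc, ih, ← mul_assoc, h, mul_assoc, ← pow_succ']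

private lemma diag_mul_eq {A B : Matrix (Fin 4) (Fin 4) ℝ}
    (hA : ∀ i j, j < i → A i j = 0) (hB : ∀ i j, j < i → B i j = 0) (i : Fin 4) :
    (A * B) i i = A i i * B i i := by
  rw [Matrix.mul_apply]
  apply Finset.sum_eq_single_of_mem i (Finset.mem_univ i)
  intro b _ hb
  rcases lt_or_gt_of_ne hb with h | h
  · rw [hA i b h, zero_mul]
  · rw [hB b i h, mul_zero]

private lemma strict_mul {k l : ℕ} {A B : Matrix (Fin 4) (Fin 4) ℝ}
    (hA : ∀ i j : Fin 4, (j : ℕ) < (i : ℕ) + k → A i j = 0)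
    (hB : ∀ i j : Fin 4, (j : ℕ) < (i : ℕ) + l → B i j = 0) :
    ∀ i j : Fin 4, (j : ℕ) < (i : ℕ) + (k + l) → (A * B) i j = 0 := by
  intro i j hij
  rw [Matrix.mul_apply]
  apply Finset.sum_eq_zero
  intro m _
  by_cases hm : (m : ℕ) < (i : ℕ) + k
  · rw [hA i m hm, zero_mul]
  · rw [hB m j (by omega), mul_zero]

variable {V : Type} [AddCommGroup V] [Module ℝ V] {p : Submodule ℝ V}

private lemma restrict_comm_sub {f g h : Module.End ℝ V}
    (hf : ∀ v ∈ p, f v ∈ p) (hg : ∀ v ∈ p, g v ∈ p) (hh : ∀ v ∈ p, h v ∈ p)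
    (hrel : f * g - g * f = h) :
    f.restrict hf * g.restrict hg - g.restrict hg * f.restrict hf = h.restrict hh := by
  refine LinearMap.ext fun v => Subtype.ext ?_
  have h1 := LinearMap.ext_iff.mp hrel (v : V)
  simp only [LinearMap.sub_apply, Module.End.mul_apply] at h1
  simp only [LinearMap.sub_apply, Module.End.mul_apply, LinearMap.restrict_apply,
    Submodule.coe_sub]
  exact h1

private lemma restrict_comm_sub0 {f g : Module.End ℝ V}
    (hf : ∀ v ∈ p, f v ∈ p) (hg : ∀ v ∈ p, g v ∈ p)
    (hrel : f * g - g * f = 0) :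
    f.restrict hf * g.restrict hg - g.restrict hg * f.restrict hf = 0 := by
  refine LinearMap.ext fun v => Subtype.ext ?_
  have h1 := LinearMap.ext_iff.mp hrel (v : V)
  simp only [LinearMap.sub_apply, Module.End.mul_apply, LinearMap.zero_apply] at h1
  simp only [LinearMap.sub_apply, Module.End.mul_apply, LinearMap.restrict_apply,
    Submodule.coe_sub, LinearMap.zero_apply, Submodule.coe_zero]
  exact h1

private lemma restrict_pow_apply {f : Module.End ℝ V} (hf : ∀ v ∈ p, f v ∈ p) (k : ℕ) :
    ∀ v : p, (((f.restrict hf) ^ k) v : V) = (f ^ k) (v : V) := by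
  induction k with
  | zero => intro v; simp
  | succ n ih =>
      intro v
      rw [pow_succ, pow_succ]
      simp only [Module.End.mul_apply]
      rw [ih (f.restrict hf v)]
      simp [LinearMap.restrict_apply]

end MainInfra

/-- The algebra `A₅,₂₂` (`[e₂,e₃]=e₁`, `[e₂,e₅]=e₃`, `[e₄,e₅]=e₄`) has no faithful
representation by upper triangular matrices in `gl(4,ℝ)`. Here `E 0,…,E 4`
correspond to `e₁,…,e₅`. -/
theorem stmt7 :
    ¬ ∃ E : Fin 5 → Matrix (Fin 4) (Fin 4) ℝ,
      (∀ k, ∀ i j : Fin 4, j < i → E k i j = 0) ∧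
      LinearIndependent ℝ E ∧
      E 1 * E 2 - E 2 * E 1 = E 0 ∧
      E 1 * E 4 - E 4 * E 1 = E 2 ∧
      E 3 * E 4 - E 4 * E 3 = E 3 ∧
      E 0 * E 1 - E 1 * E 0 = 0 ∧
      E 0 * E 2 - E 2 * E 0 = 0 ∧
      E 0 * E 3 - E 3 * E 0 = 0 ∧
      E 0 * E 4 - E 4 * E 0 = 0 ∧
      E 1 * E 3 - E 3 * E 1 = 0 ∧
      E 2 * E 3 - E 3 * E 2 = 0 ∧
      E 2 * E 4 - E 4 * E 2 = 0 := by
  rintro ⟨E, htri, hliE, h12, h14, h34, h01, h02, h03, h04, h13, h23, h24⟩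
  classical
  have hE0ne : E 0 ≠ 0 := hliE.ne_zero 0
  have hE3ne : E 3 ≠ 0 := hliE.ne_zero 3
  -- E 0 is strictly upper triangular, hence E 0 ^ 4 = 0
  have hdiag0 : ∀ i, E 0 i i = 0 := by
    intro i
    rw [← h12, Matrix.sub_apply, diag_mul_eq (htri 1) (htri 2) i,
      diag_mul_eq (htri 2) (htri 1) i]
    ring
  have h0strict : ∀ i j : Fin 4, (j : ℕ) < (i : ℕ) + 1 → E 0 i j = 0 := by
    intro i j hij
    rcases lt_or_eq_of_le (Nat.lt_succ_iff.mp hij) with h | h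
    · exact htri 0 i j (Fin.lt_def.mpr h)
    · rw [show j = i from Fin.ext h]
      exact hdiag0 i
  have h0pow : E 0 ^ 4 = 0 := by
    have h2 := strict_mul h0strict h0strict
    have h3 := strict_mul h2 h0strict
    have h4 := strict_mul h3 h0strict
    ext i j
    rw [pow_succ, pow_succ, pow_succ, pow_one]
    rw [h4 i j (by have := j.isLt; omega)]
    simp
  -- move to endomorphisms
  set Φ : Matrix (Fin 4) (Fin 4) ℝ ≃ₐ[ℝ] Module.End ℝ (Fin 4 → ℝ) :=
    Matrix.toLinAlgEquiv' with hΦ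
  set T : Fin 5 → Module.End ℝ (Fin 4 → ℝ) := fun k => Φ (E k) with hT
  have hop : ∀ a b c : Fin 5, E a * E b - E b * E a = E c →
      T a * T b - T b * T a = T c := by
    intro a b c h
    simp only [hT]
    rw [← map_mul, ← map_mul, ← map_sub, h]
  have hop0 : ∀ a b : Fin 5, E a * E b - E b * E a = 0 →
      T a * T b - T b * T a = 0 := by
    intro a b h
    simp only [hT]
    rw [← map_mul, ← map_mul, ← map_sub, h, map_zero]
  have o12 := hop 1 2 0 h12
  have o14 := hop 1 4 2 h14
  have o34 := hop 3 4 3 h34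
  have o01 := hop0 0 1 h01
  have o02 := hop0 0 2 h02
  have o04 := hop0 0 4 h04
  have o24 := hop0 2 4 h24
  have hT0pow : T 0 ^ 4 = 0 := by
    simp only [hT]
    rw [← map_pow, h0pow, map_zero]
  have hfr : Module.finrank ℝ (Fin 4 → ℝ) = 4 := by simp
  -- characteristic polynomial of E 4
  have hbt : (E 4).BlockTriangular id := fun i j hij => htri 4 i j hij
  have hcp : (E 4).charpoly = ∏ i : Fin 4, (X - C (E 4 i i)) :=
    Matrix.charpoly_of_upperTriangular (E 4) hbt
  set s : Finset ℝ := Finset.image (fun i => E 4 i i) Finset.univ with hs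
  set q : Polynomial ℝ := ∏ μ ∈ s, (X - C μ) ^ 4 with hq
  have hdvd : (E 4).charpoly ∣ q := by
    rw [hcp, hq]
    rw [← Finset.prod_fiberwise_of_maps_to (g := fun i => E 4 i i)
      (fun i _ => Finset.mem_image_of_mem _ (Finset.mem_univ i))
      (fun i => X - C (E 4 i i))]
    apply Finset.prod_dvd_prod_of_dvd
    intro μ hμ
    have hconst : ∏ i ∈ Finset.univ.filter (fun i => E 4 i i = μ), (X - C (E 4 i i))
        = (X - C μ) ^ (Finset.univ.filter (fun i => E 4 i i = μ)).card := by
      rw [Finset.prod_congr rfl fun i hi => by rw [(Finset.mem_filter.mp hi).2],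
        Finset.prod_const]
    rw [hconst]
    exact pow_dvd_pow _ (le_trans (Finset.card_filter_le _ _) (by simp))
  have haqE : (aeval (E 4)) q = 0 := by
    obtain ⟨c, hc⟩ := hdvd
    rw [hc, map_mul, Matrix.aeval_self_charpoly, zero_mul]
  have haq : (aeval (T 4)) q = 0 := by
    show (aeval (Φ (E 4))) q = 0
    rw [Polynomial.aeval_algHom_apply Φ (E 4) q, haqE, map_zero]
  -- the key fact, for every real μ
  have hKer : ∀ μ : ℝ, LinearMap.ker ((aeval (T 4)) ((X - C μ) ^ 4))
      ≤ LinearMap.ker (T 0) := by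
    intro μ
    set A : Module.End ℝ (Fin 4 → ℝ) := T 4 - algebraMap ℝ _ μ with hA
    have haev : (aeval (T 4)) ((X - C μ) ^ 4) = A ^ 4 := by
      rw [map_pow, map_sub, aeval_X, aeval_C, hA]
    rw [haev]
    set p : Submodule ℝ (Fin 4 → ℝ) := LinearMap.ker (A ^ 4) with hp
    have c40 : Commute (T 4) (T 0) := (sub_eq_zero.mp o04).symm
    have c42 : Commute (T 4) (T 2) := (sub_eq_zero.mp o24).symm
    have cA0 : Commute A (T 0) := c40.sub_left (Algebra.commutes μ (T 0))
    have cA2 : Commute A (T 2) := c42.sub_left (Algebra.commutes μ (T 2))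
    have cA4 : Commute A (T 4) := (Commute.refl (T 4)).symm.sub_left
      (Algebra.commutes μ (T 4))
    have hmem_of_comm : ∀ u : Module.End ℝ (Fin 4 → ℝ), Commute A u →
        ∀ v ∈ p, u v ∈ p := by
      intro u hc v hv
      rw [hp, LinearMap.mem_ker] at hv ⊢
      have hcp4 : Commute (A ^ 4) u := hc.pow_left 4
      have := LinearMap.ext_iff.mp hcp4.eq v
      simp only [Module.End.mul_apply] at this
      rw [this, hv, map_zero]
    have hm0 : ∀ v ∈ p, T 0 v ∈ p := hmem_of_comm (T 0) cA0
    have hm2 : ∀ v ∈ p, T 2 v ∈ p := hmem_of_comm (T 2) cA2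
    have hm4 : ∀ v ∈ p, T 4 v ∈ p := hmem_of_comm (T 4) cA4
    have hAT1 : A * T 1 = T 1 * A - T 2 := by
      have h1 : T 4 * T 1 = T 1 * T 4 - T 2 := by rw [← o14]; abel
      rw [hA, sub_mul, h1, mul_sub, Algebra.commutes μ (T 1)]
      abel
    have hstep1 : ∀ t, A (T 1 t) = T 1 (A t) - T 2 t := fun t => by
      have := LinearMap.ext_iff.mp hAT1 t
      simpa [Module.End.mul_apply, LinearMap.sub_apply] using this
    have hstep2 : ∀ t, A (T 2 t) = T 2 (A t) := fun t => by
      have := LinearMap.ext_iff.mp cA2.eq t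
      simpa [Module.End.mul_apply] using this
    have hm1 : ∀ v ∈ p, T 1 v ∈ p := by
      intro v hv
      rw [hp, LinearMap.mem_ker] at hv
      have hv' : A (A (A (A v))) = 0 := by
        have heq : (A ^ 4) v = A (A (A (A v))) := by
          simp [pow_succ, Module.End.mul_apply]
        rwa [heq] at hv
      have h5 : (A ^ 5) (T 1 v) = 0 := by
        have h5eq : (A ^ 5) (T 1 v) = A (A (A (A (A (T 1 v))))) := by
          simp [pow_succ, Module.End.mul_apply]
        rw [h5eq]
        simp only [hstep1, map_sub, hstep2, hv', map_zero, sub_zero, zero_sub,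
          neg_zero, sub_self]
        all_goals simp [hstep2, hv']
      have hker5 := Module.End.ker_pow_le_ker_pow_finrank A 5
      rw [hfr] at hker5
      have := hker5 (LinearMap.mem_ker.mpr h5)
      rw [hp]
      exact this
    by_cases hdim : Module.finrank ℝ p ≤ 3
    · -- apply the key dimension lemma
      set xr := (T 1).restrict hm1 with hxr
      set wr := (T 4).restrict hm4 with hwr
      set yr := (T 2).restrict hm2 with hyr
      set zr := (T 0).restrict hm0 with hzr
      have hzr4 : zr ^ 4 = 0 := by
        refine LinearMap.ext fun v => Subtype.ext ?_
        have hcoe := restrict_pow_apply hm0 4 v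
        simp only [LinearMap.zero_apply, Submodule.coe_zero, hzr]
        rw [hcoe, hT0pow]
        rfl
      have hz0 := lemL hdim xr wr yr zr
        (restrict_comm_sub hm1 hm4 hm2 o14)
        (restrict_comm_sub hm1 hm2 hm0 o12)
        (restrict_comm_sub0 hm2 hm4 o24)
        (restrict_comm_sub0 hm0 hm1 o01)
        (restrict_comm_sub0 hm0 hm2 o02)
        (restrict_comm_sub0 hm0 hm4 o04)
        hzr4
      intro v hv
      rw [LinearMap.mem_ker]
      have h1 := LinearMap.ext_iff.mp hz0 ⟨v, hv⟩
      have h2 : ((zr ⟨v, hv⟩ : p) : Fin 4 → ℝ) = T 0 v := by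
        simp [hzr, LinearMap.restrict_apply]
      rw [h1] at h2
      simpa using h2.symm
    · -- p = ⊤ would force E 3 = 0
      exfalso
      have hple : Module.finrank ℝ p ≤ 4 := by
        have := Submodule.finrank_le p
        rwa [hfr] at this
      have hpt : p = ⊤ := Submodule.eq_top_of_finrank_eq (by rw [hfr]; omega)
      set Bop : Module.End ℝ (Fin 4 → ℝ) := T 4 - algebraMap ℝ _ (μ - 1) with hBop
      have hBT3 : Bop * T 3 = T 3 * A := by
        have h1 : T 4 * T 3 = T 3 * T 4 - T 3 := by
          rw [sub_eq_iff_eq_add.mp o34]; abel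
        have h2 : (algebraMap ℝ (Module.End ℝ (Fin 4 → ℝ)) (μ - 1))
            = algebraMap ℝ _ μ - 1 := by rw [map_sub, map_one]
        rw [hBop, hA, sub_mul, h1, mul_sub, Algebra.commutes (μ - 1) (T 3), h2,
          mul_sub, mul_one]
        abel
      have hBT3p : Bop ^ 4 * T 3 = T 3 * A ^ 4 := semiconj_pow' hBT3 4
      have hT3v : ∀ v, T 3 v = 0 := by
        intro v
        have hvp : v ∈ p := by rw [hpt]; trivial
        rw [hp, LinearMap.mem_ker] at hvp
        have hmem1 : T 3 v ∈ LinearMap.ker ((aeval (T 4)) ((X - C (μ - 1)) ^ 4)) := by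
          have haev' : (aeval (T 4)) ((X - C (μ - 1)) ^ 4) = Bop ^ 4 := by
            rw [map_pow, map_sub, aeval_X, aeval_C, hBop]
          rw [haev', LinearMap.mem_ker]
          have := LinearMap.ext_iff.mp hBT3p v
          simp only [Module.End.mul_apply] at this
          rw [this, hvp, map_zero]
        have hdisj : Disjoint (LinearMap.ker ((aeval (T 4)) ((X - C μ) ^ 4)))
            (LinearMap.ker ((aeval (T 4)) ((X - C (μ - 1)) ^ 4))) :=
          Polynomial.disjoint_ker_aeval_of_isCoprime (T 4)
            ((isCoprime_X_sub_C_of_isUnit_sub (by simp)).pow)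
        have hker1top : LinearMap.ker ((aeval (T 4)) ((X - C μ) ^ 4)) = ⊤ := by
          rw [haev, ← hp]; exact hpt
        have hbot : LinearMap.ker ((aeval (T 4)) ((X - C (μ - 1)) ^ 4)) = ⊥ := by
          rw [disjoint_iff, hker1top, top_inf_eq] at hdisj
          exact hdisj
        rw [hbot] at hmem1
        simp only [Submodule.mem_bot] at hmem1
        exact hmem1
      have hT3 : T 3 = 0 := LinearMap.ext fun v => by rw [hT3v v]; rfl
      apply hE3ne
      apply Φ.injective
      rw [map_zero]
      exact hT3
  -- assemble: the kernel of aeval q is everything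
  have hmain : ∀ s' : Finset ℝ,
      LinearMap.ker ((aeval (T 4)) (∏ ν ∈ s', (X - C ν) ^ 4)) ≤ LinearMap.ker (T 0) := by
    intro s'
    induction s' using Finset.induction_on with
    | empty =>
        rw [Finset.prod_empty, map_one]
        rw [Module.End.one_eq_id, LinearMap.ker_id]
        exact bot_le
    | @insert ν s'' hν ih =>
        have hcop : IsCoprime ((X - C ν) ^ 4) (∏ ρ ∈ s'', (X - C ρ) ^ 4) :=
          IsCoprime.prod_right fun ρ hρ =>
            (isCoprime_X_sub_C_of_isUnit_sub
              ((sub_ne_zero.mpr (fun hh => hν (by rw [hh]; exact hρ))).isUnit)).pow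
        rw [Finset.prod_insert hν,
          ← Polynomial.sup_ker_aeval_eq_ker_aeval_mul_of_coprime (T 4) hcop]
        exact sup_le (hKer ν) ih
  have hT0 : T 0 = 0 := by
    have h1 : LinearMap.ker ((aeval (T 4)) q) = ⊤ := by
      rw [haq]; exact LinearMap.ker_zero
    have h2 := hmain s
    rw [← hq] at h2
    exact LinearMap.ker_eq_top.mp (eq_top_iff.mpr (h1 ▸ h2))
  apply hE0ne
  apply Φ.injective
  rw [map_zero]
  exact hT0
end

section
/- Over ℂ, the Lie algebra A₅,₃₇ (nonzero brackets [e₂,e₃]=e₁, [e₁,e₄]=2e₁, [e₂,e₄]=e₂, [e₃,e₄]=e₃, [e₂,e₅]=−e₃, [e₃,e₅]=e₂) is isomorphic to the complexification of A₅,₃₆ (nonzero brackets [e₂,e₃]=e₁, [e₁,e₄]=e₁, [e₂,e₄]=e₂, [e₂,e₅]=−e₂, [e₃,e₅]=e₃). An explicit isomorphism is given on the complexified basis by ē₁ = −e₁/2, ē₂ = (e₂+e₃)/2, ē₃ = i(e₂−e₃)/2, ē₄ = 2e₄+e₅, ē₅ = −i e₅, followed by rescaling ē₁ to remove a factor of i.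 -/
set_option linter.unreachableTactic false
set_option linter.unusedTactic false
/-- Over `ℂ`, the Lie algebra `A₅,₃₇` is isomorphic to (the complexification of)
`A₅,₃₆`: any complex Lie algebra with a basis satisfying the `A₅,₃₇` bracket table
is isomorphic to any complex Lie algebra with a basis satisfying the `A₅,₃₆`
bracket table. -/
theorem stmt15 {g h : Type*} [LieRing g] [LieAlgebra ℂ g] [LieRing h] [LieAlgebra ℂ h]
    (e : Module.Basis (Fin 5) ℂ g) (f : Module.Basis (Fin 5) ℂ h)
    -- A₅,₃₇ bracket table on e
    (he23 : ⁅e 1, e 2⁆ = e 0) (he14 : ⁅e 0, e 3⁆ = (2 : ℂ) • e 0)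
    (he24 : ⁅e 1, e 3⁆ = e 1) (he34 : ⁅e 2, e 3⁆ = e 2)
    (he25 : ⁅e 1, e 4⁆ = -e 2) (he35 : ⁅e 2, e 4⁆ = e 1)
    (he12 : ⁅e 0, e 1⁆ = 0) (he13 : ⁅e 0, e 2⁆ = 0)
    (he15 : ⁅e 0, e 4⁆ = 0) (he45 : ⁅e 3, e 4⁆ = 0)
    -- A₅,₃₆ bracket table on f
    (hf23 : ⁅f 1, f 2⁆ = f 0) (hf14 : ⁅f 0, f 3⁆ = f 0)
    (hf24 : ⁅f 1, f 3⁆ = f 1) (hf25 : ⁅f 1, f 4⁆ = -f 1)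
    (hf35 : ⁅f 2, f 4⁆ = f 2)
    (hf12 : ⁅f 0, f 1⁆ = 0) (hf13 : ⁅f 0, f 2⁆ = 0)
    (hf15 : ⁅f 0, f 4⁆ = 0) (hf34 : ⁅f 2, f 3⁆ = 0) (hf45 : ⁅f 3, f 4⁆ = 0) :
    Nonempty (g ≃ₗ⁅ℂ⁆ h) := by
  classical
  set w : Fin 5 → h := ![(Complex.I/2) • f 0, (1/2 : ℂ) • (f 1 + f 2),
    (-(Complex.I/2)) • (f 1 - f 2), (2:ℂ) • f 3 + f 4, (-Complex.I) • f 4] with hw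
  set v : Fin 5 → g := ![(-(2*Complex.I)) • e 0, e 1 + Complex.I • e 2,
    e 1 - Complex.I • e 2, (1/2 : ℂ) • e 3 + (-(Complex.I/2)) • e 4, Complex.I • e 4] with hv
  set S : g →ₗ[ℂ] h := e.constr ℂ w with hS
  set T : h →ₗ[ℂ] g := f.constr ℂ v with hT
  have hSe : ∀ i, S (e i) = w i := fun i => e.constr_basis ℂ w i
  have hTf : ∀ i, T (f i) = v i := fun i => f.constr_basis ℂ v i
  have hST : S.comp T = LinearMap.id := by
    apply f.ext
    intro i
    fin_cases i <;>
      simp [hTf, hv, hw, map_add, map_smul, hSe, smul_smul, smul_add, smul_sub] <;>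
      match_scalars <;> ring_nf <;> simp [Complex.I_sq] <;> (try ring_nf)
  have hTS : T.comp S = LinearMap.id := by
    apply e.ext
    intro i
    fin_cases i <;>
      simp [hTf, hv, hw, map_add, map_smul, hSe, smul_smul, smul_add, smul_sub] <;>
      match_scalars <;> ring_nf <;> simp [Complex.I_sq] <;> (try ring_nf)
  have he32 : ⁅e 2, e 1⁆ = -e 0 := by rw [← lie_skew, he23]
  have he41 : ⁅e 3, e 0⁆ = -((2:ℂ) • e 0) := by rw [← lie_skew, he14]
  have he42 : ⁅e 3, e 1⁆ = -e 1 := by rw [← lie_skew, he24]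
  have he43 : ⁅e 3, e 2⁆ = -e 2 := by rw [← lie_skew, he34]
  have he52 : ⁅e 4, e 1⁆ = e 2 := by rw [← lie_skew, he25, neg_neg]
  have he53 : ⁅e 4, e 2⁆ = -e 1 := by rw [← lie_skew, he35]
  have he21 : ⁅e 1, e 0⁆ = 0 := by rw [← lie_skew, he12, neg_zero]
  have he31 : ⁅e 2, e 0⁆ = 0 := by rw [← lie_skew, he13, neg_zero]
  have he51 : ⁅e 4, e 0⁆ = 0 := by rw [← lie_skew, he15, neg_zero]
  have he54 : ⁅e 4, e 3⁆ = 0 := by rw [← lie_skew, he45, neg_zero]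
  have hf32 : ⁅f 2, f 1⁆ = -f 0 := by rw [← lie_skew, hf23]
  have hf41 : ⁅f 3, f 0⁆ = -f 0 := by rw [← lie_skew, hf14]
  have hf42 : ⁅f 3, f 1⁆ = -f 1 := by rw [← lie_skew, hf24]
  have hf52 : ⁅f 4, f 1⁆ = f 1 := by rw [← lie_skew, hf25, neg_neg]
  have hf53 : ⁅f 4, f 2⁆ = -f 2 := by rw [← lie_skew, hf35]
  have hf21 : ⁅f 1, f 0⁆ = 0 := by rw [← lie_skew, hf12, neg_zero]
  have hf31 : ⁅f 2, f 0⁆ = 0 := by rw [← lie_skew, hf13, neg_zero]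
  have hf51 : ⁅f 4, f 0⁆ = 0 := by rw [← lie_skew, hf15, neg_zero]
  have hf43 : ⁅f 3, f 2⁆ = 0 := by rw [← lie_skew, hf34, neg_zero]
  have hf54 : ⁅f 4, f 3⁆ = 0 := by rw [← lie_skew, hf45, neg_zero]
  have key : ∀ i j, S ⁅e i, e j⁆ = ⁅S (e i), S (e j)⁆ := by
    intro i j
    fin_cases i <;> fin_cases j <;>
      simp [hSe, hw, he23, he14, he24, he34, he25, he35, he12, he13, he15, he45,
        he32, he41, he42, he43, he52, he53, he21, he31, he51, he54,
        hf23, hf14, hf24, hf25, hf35, hf12, hf13, hf15, hf34, hf45,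
        hf32, hf41, hf42, hf52, hf53, hf21, hf31, hf51, hf43, hf54,
        map_add, map_smul, lie_add, add_lie, lie_smul, smul_lie, smul_smul, smul_add,
        smul_sub, sub_lie, lie_sub] <;>
      match_scalars <;> ring_nf <;> simp [Complex.I_sq] <;> (try ring_nf)
  have hlie : ∀ x y : g, S ⁅x, y⁆ = ⁅S x, S y⁆ := by
    let B1 : g →ₗ[ℂ] g →ₗ[ℂ] h := LinearMap.mk₂ ℂ (fun x y => S ⁅x, y⁆)
      (fun m n p => by simp [add_lie]) (fun c m n => by simp [smul_lie])
      (fun m n p => by simp [lie_add]) (fun c m n => by simp [lie_smul])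
    let B2 : g →ₗ[ℂ] g →ₗ[ℂ] h := LinearMap.mk₂ ℂ (fun x y => ⁅S x, S y⁆)
      (fun m n p => by simp [add_lie]) (fun c m n => by simp [smul_lie])
      (fun m n p => by simp [lie_add]) (fun c m n => by simp [lie_smul])
    have hB : B1 = B2 := by
      apply e.ext; intro i; apply e.ext; intro j
      simpa [B1, B2] using key i j
    intro x y
    simpa [B1, B2] using LinearMap.congr_fun (LinearMap.congr_fun hB x) y
  let φ : g ≃ₗ[ℂ] h := LinearEquiv.ofLinear S T hST hTS
  exact ⟨{ toLinearMap := S, map_lie' := fun {x y} => hlie x y, invFun := φ.symm,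
           left_inv := φ.left_inv, right_inv := φ.right_inv }⟩
end

section
/- Let E₄ = [[0,t,u,v],[0,0,p,q],[0,0,0,r],[0,0,0,0]] and E₅ = [[a,b,c,d],[0,e,f,g],[0,0,h,i],[0,0,0,j]] be real 4×4 matrices, and define E₃ = [E₄,E₅] − E₄, E₂ = [E₃,E₄], E₁ = [E₂,E₄]. Then E₁ has a single possibly-nonzero entry, in position (1,4), equal to t·p·r·(3e − a − 3h + j). Moreover if [E₃,E₅] = E₃ then t(e−a−1)² = 0, p(h−e−1)² = 0, r(j−h−1)² = 0; hence if additionally tpr ≠ 0 then e = a+1, h = e+1, j = h+1 and E₁ = 0. -/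
set_option maxHeartbeats 1600000


lemma stmt17_zero_aux : !![(0:ℝ),0,0,0; 0,0,0,0; 0,0,0,0; 0,0,0,0] = 0 := by
  ext k l
  fin_cases k <;> fin_cases l <;> rfl

/-- Key computation for the nonexistence of a `gl(4,ℝ)` representation of
`A₅,₃₁`. -/
theorem stmt17 (a b c d e f g h i j p q r t u v : ℝ)
    (E₁ E₂ E₃ E₄ E₅ : Matrix (Fin 4) (Fin 4) ℝ)
    (hE₄ : E₄ = !![0,t,u,v; 0,0,p,q; 0,0,0,r; 0,0,0,0])
    (hE₅ : E₅ = !![a,b,c,d; 0,e,f,g; 0,0,h,i; 0,0,0,j])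
    (hE₃ : E₃ = (E₄ * E₅ - E₅ * E₄) - E₄)
    (hE₂ : E₂ = E₃ * E₄ - E₄ * E₃)
    (hE₁ : E₁ = E₂ * E₄ - E₄ * E₂) :
    (∀ k l : Fin 4, ¬(k = 0 ∧ l = 3) → E₁ k l = 0) ∧
    E₁ 0 3 = t * p * r * (3 * e - a - 3 * h + j) ∧
    (E₃ * E₅ - E₅ * E₃ = E₃ →
      t * (e - a - 1) ^ 2 = 0 ∧ p * (h - e - 1) ^ 2 = 0 ∧ r * (j - h - 1) ^ 2 = 0) ∧
    (E₃ * E₅ - E₅ * E₃ = E₃ → t * p * r ≠ 0 →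
      e = a + 1 ∧ h = e + 1 ∧ j = h + 1 ∧ E₁ = 0) := by
  subst hE₄ hE₅ hE₃ hE₂ hE₁
  have h1 : ((!![(0:ℝ),t,u,v; 0,0,p,q; 0,0,0,r; 0,0,0,0] * !![a,b,c,d; 0,e,f,g; 0,0,h,i; 0,0,0,j]
      - !![a,b,c,d; 0,e,f,g; 0,0,h,i; 0,0,0,j] * !![0,t,u,v; 0,0,p,q; 0,0,0,r; 0,0,0,0])
      - !![0,t,u,v; 0,0,p,q; 0,0,0,r; 0,0,0,0]) =
      !![0, t*e - a*t - t, u*h + t*f - a*u - b*p - u, v*j + t*g + u*i - a*v - b*q - c*r - v;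
         0, 0, p*h - e*p - p, q*j + p*i - e*q - f*r - q;
         0, 0, 0, r*j - h*r - r;
         0, 0, 0, 0] := by
    ext k l
    fin_cases k <;> fin_cases l <;>
      simp [Matrix.mul_apply, Fin.sum_univ_four, Matrix.vecHead, Matrix.vecTail] <;> ring
  rw [h1]
  set A := t*e - a*t - t with hA
  set B := u*h + t*f - a*u - b*p - u with hB
  set C := v*j + t*g + u*i - a*v - b*q - c*r - v with hC
  set D := p*h - e*p - p with hD
  set F := q*j + p*i - e*q - f*r - q with hF
  set G := r*j - h*r - r with hG
  have h2 : (!![(0:ℝ), A, B, C; 0, 0, D, F; 0, 0, 0, G; 0, 0, 0, 0] *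
        !![0,t,u,v; 0,0,p,q; 0,0,0,r; 0,0,0,0]
      - !![0,t,u,v; 0,0,p,q; 0,0,0,r; 0,0,0,0] *
        !![(0:ℝ), A, B, C; 0, 0, D, F; 0, 0, 0, G; 0, 0, 0, 0]) =
      !![0, 0, A*p - t*D, A*q + B*r - t*F - u*G;
         0, 0, 0, D*r - p*G;
         0, 0, 0, 0;
         0, 0, 0, 0] := by
    ext k l
    fin_cases k <;> fin_cases l <;>
      simp [Matrix.mul_apply, Fin.sum_univ_four, Matrix.vecHead, Matrix.vecTail] <;> ring
  rw [h2]
  have h3 : (!![(0:ℝ), 0, A*p - t*D, A*q + B*r - t*F - u*G; 0, 0, 0, D*r - p*G;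
        0, 0, 0, 0; 0, 0, 0, 0] * !![0,t,u,v; 0,0,p,q; 0,0,0,r; 0,0,0,0]
      - !![0,t,u,v; 0,0,p,q; 0,0,0,r; 0,0,0,0] *
        !![(0:ℝ), 0, A*p - t*D, A*q + B*r - t*F - u*G; 0, 0, 0, D*r - p*G;
        0, 0, 0, 0; 0, 0, 0, 0]) =
      !![0, 0, 0, (A*p - t*D)*r - t*(D*r - p*G);
         0, 0, 0, 0;
         0, 0, 0, 0;
         0, 0, 0, 0] := by
    ext k l
    fin_cases k <;> fin_cases l <;>
      simp [Matrix.mul_apply, Fin.sum_univ_four, Matrix.vecHead, Matrix.vecTail] <;> ring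
  rw [h3]
  have hval : (A*p - t*D)*r - t*(D*r - p*G) = t * p * r * (3 * e - a - 3 * h + j) := by
    simp only [hA, hD, hG]; ring
  have squares : (!![(0:ℝ), A, B, C; 0, 0, D, F; 0, 0, 0, G; 0, 0, 0, 0] *
        !![a,b,c,d; 0,e,f,g; 0,0,h,i; 0,0,0,j]
      - !![a,b,c,d; 0,e,f,g; 0,0,h,i; 0,0,0,j] *
        !![(0:ℝ), A, B, C; 0, 0, D, F; 0, 0, 0, G; 0, 0, 0, 0]) =
        !![(0:ℝ), A, B, C; 0, 0, D, F; 0, 0, 0, G; 0, 0, 0, 0] →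
      t * (e - a - 1) ^ 2 = 0 ∧ p * (h - e - 1) ^ 2 = 0 ∧ r * (j - h - 1) ^ 2 = 0 := by
    intro hc
    have h01 := congrFun (congrFun hc 0) 1
    have h12 := congrFun (congrFun hc 1) 2
    have h23 := congrFun (congrFun hc 2) 3
    simp [Matrix.mul_apply, Fin.sum_univ_four, Matrix.vecHead, Matrix.vecTail] at h01 h12 h23
    refine ⟨?_, ?_, ?_⟩
    · simp only [hA] at h01; nlinarith [h01]
    · simp only [hD] at h12; nlinarith [h12]
    · simp only [hG] at h23; nlinarith [h23]
  refine ⟨?_, ?_, squares, ?_⟩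
  · intro k l hkl
    fin_cases k <;> fin_cases l <;> simp at hkl ⊢ <;> tauto
  · simpa using hval
  · intro hc htpr
    obtain ⟨s1, s2, s3⟩ := squares hc
    have ht : t ≠ 0 := fun h0 => htpr (by rw [h0]; ring)
    have hp : p ≠ 0 := fun h0 => htpr (by rw [h0]; ring)
    have hr : r ≠ 0 := fun h0 => htpr (by rw [h0]; ring)
    have he : e = a + 1 := by
      have := (mul_eq_zero.mp s1).resolve_left ht
      have := pow_eq_zero_iff (n := 2) (by norm_num) |>.mp this
      linarith
    have hh : h = e + 1 := by
      have := (mul_eq_zero.mp s2).resolve_left hp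
      have := pow_eq_zero_iff (n := 2) (by norm_num) |>.mp this
      linarith
    have hj : j = h + 1 := by
      have := (mul_eq_zero.mp s3).resolve_left hr
      have := pow_eq_zero_iff (n := 2) (by norm_num) |>.mp this
      linarith
    refine ⟨he, hh, hj, ?_⟩
    have : (A*p - t*D)*r - t*(D*r - p*G) = 0 := by
      rw [hval, hh, he, hj, hh, he]; ring
    rw [this]
    exact stmt17_zero_aux
end
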